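/- Let a_1 < ... < a_n be integers. The number of orbits of the conjugation action of the unipotent upper triangular group U_n(ℤ) on the set of upper triangular integer matrices with diagonal (a_1, ..., a_n) equals Δ = ∏_{i<j} (a_j − a_i). -/

import Mathlib

open Matrix Finset

namespace Stmt6

variable {n : ℕ} (a : Fin n → ℤ)

/-- The set Ω. -/
abbrev Omega := {M : Matrix (Fin n) (Fin n) ℤ // M.BlockTriangular id ∧ ∀ i, M i i = a i}

/-- The orbit relation. -/
def rel (A B : Omega a) : Prop :=
  ∃ P : Matrix.GeneralLinearGroup (Fin n) ℤ,
    (P : Matrix (Fin n) (Fin n) ℤ).BlockTriangular id ∧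
    (∀ i, (P : Matrix (Fin n) (Fin n) ℤ) i i = 1) ∧
    (P : Matrix (Fin n) (Fin n) ℤ) * (A : Matrix (Fin n) (Fin n) ℤ) *
      ((P⁻¹ : Matrix.GeneralLinearGroup (Fin n) ℤ) : Matrix (Fin n) (Fin n) ℤ) = B

variable {a}

lemma diag_mul {M N : Matrix (Fin n) (Fin n) ℤ} (hM : M.BlockTriangular id)
    (hN : N.BlockTriangular id) (i : Fin n) : (M * N) i i = M i i * N i i := by
  rw [Matrix.mul_apply]
  refine Finset.sum_eq_single i (fun k _ hk => ?_) (by simp)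
  rcases lt_or_gt_of_ne hk with h | h
  · rw [hM (show (id k : Fin n) < id i from h), zero_mul]
  · rw [hN (show (id i : Fin n) < id k from h), mul_zero]

lemma inv_tri {P : Matrix.GeneralLinearGroup (Fin n) ℤ}
    (h1 : (P : Matrix (Fin n) (Fin n) ℤ).BlockTriangular id)
    (h2 : ∀ i, (P : Matrix (Fin n) (Fin n) ℤ) i i = 1) :
    ((P⁻¹ : Matrix.GeneralLinearGroup (Fin n) ℤ) : Matrix (Fin n) (Fin n) ℤ).BlockTriangular id ∧
      ∀ i, ((P⁻¹ : Matrix.GeneralLinearGroup (Fin n) ℤ) : Matrix (Fin n) (Fin n) ℤ) i i = 1 := by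
  have hcoe : ((P⁻¹ : Matrix.GeneralLinearGroup (Fin n) ℤ) : Matrix (Fin n) (Fin n) ℤ)
      = (P : Matrix (Fin n) (Fin n) ℤ)⁻¹ := Matrix.coe_units_inv P
  haveI : Invertible (P : Matrix (Fin n) (Fin n) ℤ) := P.invertible
  have htri : ((P⁻¹ : Matrix.GeneralLinearGroup (Fin n) ℤ) :
      Matrix (Fin n) (Fin n) ℤ).BlockTriangular id := by
    rw [hcoe]; exact Matrix.blockTriangular_inv_of_blockTriangular h1
  refine ⟨htri, fun i => ?_⟩
  have h := diag_mul h1 htri i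
  have hone : (P : Matrix (Fin n) (Fin n) ℤ) *
      ((P⁻¹ : Matrix.GeneralLinearGroup (Fin n) ℤ) : Matrix (Fin n) (Fin n) ℤ) = 1 := by
    rw [← Units.val_mul, mul_inv_cancel, Units.val_one]
  rw [hone] at h
  simpa [h2 i] using h.symm

lemma rel_equiv : Equivalence (rel a) := by
  constructor
  · intro A
    refine ⟨1, by simpa using Matrix.blockTriangular_one, by simp, by simp⟩
  · rintro A B ⟨P, hP1, hP2, hP3⟩
    obtain ⟨hQ1, hQ2⟩ := inv_tri hP1 hP2
    refine ⟨P⁻¹, hQ1, hQ2, ?_⟩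
    rw [inv_inv]
    have h1 : ((P⁻¹ : Matrix.GeneralLinearGroup (Fin n) ℤ) : Matrix (Fin n) (Fin n) ℤ) *
        (P : Matrix (Fin n) (Fin n) ℤ) = 1 := P.inv_mul
    rw [← hP3]
    simp only [← mul_assoc]
    rw [h1, one_mul, mul_assoc, h1, mul_one]
  · rintro A B C ⟨P, hP1, hP2, hP3⟩ ⟨Q, hQ1, hQ2, hQ3⟩
    refine ⟨Q * P, ?_, ?_, ?_⟩
    · rw [Units.val_mul]; exact hQ1.mul hP1
    · intro i
      rw [Units.val_mul, diag_mul hQ1 hP1, hQ2 i, hP2 i, one_mul]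
    · have h2 : (((Q * P)⁻¹ : Matrix.GeneralLinearGroup (Fin n) ℤ) :
          Matrix (Fin n) (Fin n) ℤ) = ((P⁻¹ : Matrix.GeneralLinearGroup (Fin n) ℤ) :
          Matrix (Fin n) (Fin n) ℤ) * ((Q⁻¹ : Matrix.GeneralLinearGroup (Fin n) ℤ) :
          Matrix (Fin n) (Fin n) ℤ) := by
        rw [_root_.mul_inv_rev]; exact Units.val_mul _ _
      rw [Units.val_mul, h2, ← hQ3, ← hP3]
      simp only [mul_assoc]


/-- Box condition: entries above the diagonal reduced mod `a j - a i`. -/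
def InBox (B : Omega a) : Prop :=
  ∀ i j : Fin n, i < j → 0 ≤ (B : Matrix (Fin n) (Fin n) ℤ) i j ∧
    (B : Matrix (Fin n) (Fin n) ℤ) i j < a j - a i

lemma box_unique (ha : StrictMono a) {B B' : Omega a} (hB : InBox B) (hB' : InBox B')
    (h : rel a B B') : B = B' := by
  obtain ⟨P, hP1, hP2, hP3⟩ := h
  -- turn conjugation into a commutation relation
  have hcomm : (P : Matrix (Fin n) (Fin n) ℤ) * (B : Matrix (Fin n) (Fin n) ℤ)
      = (B' : Matrix (Fin n) (Fin n) ℤ) * (P : Matrix (Fin n) (Fin n) ℤ) := by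
    have h1 : ((P⁻¹ : Matrix.GeneralLinearGroup (Fin n) ℤ) : Matrix (Fin n) (Fin n) ℤ) *
        (P : Matrix (Fin n) (Fin n) ℤ) = 1 := P.inv_mul
    calc (P : Matrix (Fin n) (Fin n) ℤ) * (B : Matrix (Fin n) (Fin n) ℤ)
        = (P : Matrix (Fin n) (Fin n) ℤ) * (B : Matrix (Fin n) (Fin n) ℤ) *
          (((P⁻¹ : Matrix.GeneralLinearGroup (Fin n) ℤ) : Matrix (Fin n) (Fin n) ℤ) *
            (P : Matrix (Fin n) (Fin n) ℤ)) := by rw [h1, mul_one]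
      _ = (B' : Matrix (Fin n) (Fin n) ℤ) * (P : Matrix (Fin n) (Fin n) ℤ) := by
          rw [← hP3]; simp only [mul_assoc]
  have key : ∀ m : ℕ, ∀ i j : Fin n, i < j → j.val - i.val = m →
      (P : Matrix (Fin n) (Fin n) ℤ) i j = 0 ∧
      (B : Matrix (Fin n) (Fin n) ℤ) i j = (B' : Matrix (Fin n) (Fin n) ℤ) i j := by
    intro m
    induction m using Nat.strong_induction_on with
    | _ m ih =>
      intro i j hij hm
      have hij' : (i : ℕ) < j := hij
      have hPB : ((P : Matrix (Fin n) (Fin n) ℤ) * (B : Matrix (Fin n) (Fin n) ℤ)) i j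
          = ((B' : Matrix (Fin n) (Fin n) ℤ) * (P : Matrix (Fin n) (Fin n) ℤ)) i j := by
        rw [hcomm]
      have e1 : ((P : Matrix (Fin n) (Fin n) ℤ) * (B : Matrix (Fin n) (Fin n) ℤ)) i j
          = (B : Matrix (Fin n) (Fin n) ℤ) i j + (P : Matrix (Fin n) (Fin n) ℤ) i j * a j := by
        rw [Matrix.mul_apply]
        rw [← Finset.sum_subset (Finset.subset_univ ({i, j} : Finset (Fin n)))
          (fun k _ hk => ?_)]
        · rw [Finset.sum_pair hij.ne, hP2 i, B.2.2 j, one_mul]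
        · simp only [Finset.mem_insert, Finset.mem_singleton, not_or] at hk
          obtain ⟨hki, hkj⟩ := hk
          rcases lt_trichotomy k i with h | h | h
          · rw [hP1 (show (id k : Fin n) < id i from h), zero_mul]
          · exact absurd h hki
          · rcases lt_trichotomy k j with h2 | h2 | h2
            · have := (ih ((k : ℕ) - i) (by omega) i k h (rfl)).1
              rw [this, zero_mul]
            · exact absurd h2 hkj
            · rw [B.2.1 (show (id j : Fin n) < id k from h2), mul_zero]
      have e2 : ((B' : Matrix (Fin n) (Fin n) ℤ) * (P : Matrix (Fin n) (Fin n) ℤ)) i j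
          = (B' : Matrix (Fin n) (Fin n) ℤ) i j + a i * (P : Matrix (Fin n) (Fin n) ℤ) i j := by
        rw [Matrix.mul_apply]
        rw [← Finset.sum_subset (Finset.subset_univ ({i, j} : Finset (Fin n)))
          (fun k _ hk => ?_)]
        · rw [Finset.sum_pair hij.ne, hP2 j, B'.2.2 i, mul_one, add_comm]
        · simp only [Finset.mem_insert, Finset.mem_singleton, not_or] at hk
          obtain ⟨hki, hkj⟩ := hk
          rcases lt_trichotomy k i with h | h | h
          · rw [B'.2.1 (show (id k : Fin n) < id i from h), zero_mul]
          · exact absurd h hki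
          · rcases lt_trichotomy k j with h2 | h2 | h2
            · have := (ih ((j : ℕ) - k) (by omega) k j h2 (rfl)).1
              rw [this, mul_zero]
            · exact absurd h2 hkj
            · rw [hP1 (show (id j : Fin n) < id k from h2), mul_zero]
      rw [e1, e2] at hPB
      have hd : 0 < a j - a i := sub_pos.mpr (ha hij)
      obtain ⟨hb1, hb2⟩ := hB i j hij
      obtain ⟨hb3, hb4⟩ := hB' i j hij
      have heq : (P : Matrix (Fin n) (Fin n) ℤ) i j * (a j - a i)
          = (B' : Matrix (Fin n) (Fin n) ℤ) i j - (B : Matrix (Fin n) (Fin n) ℤ) i j := by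
        linarith
      have hlt : (P : Matrix (Fin n) (Fin n) ℤ) i j * (a j - a i) < 1 * (a j - a i) := by
        rw [one_mul]; linarith
      have hgt : (-1 : ℤ) * (a j - a i) < (P : Matrix (Fin n) (Fin n) ℤ) i j * (a j - a i) := by
        linarith
      have hP0 : (P : Matrix (Fin n) (Fin n) ℤ) i j = 0 := by
        have := lt_of_mul_lt_mul_right hlt hd.le
        have := lt_of_mul_lt_mul_right hgt hd.le
        omega
      refine ⟨hP0, ?_⟩
      rw [hP0, zero_mul] at heq
      linarith
  apply Subtype.ext
  ext i j
  rcases lt_trichotomy i j with h | h | h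
  · exact (key ((j : ℕ) - i) i j h rfl).2
  · subst h; rw [B.2.2 i, B'.2.2 i]
  · rw [B.2.1 (show (id j : Fin n) < id i from h), B'.2.1 (show (id j : Fin n) < id i from h)]


lemma elem_conj (A : Omega a) (i j : Fin n) (hij : i < j) (t : ℤ) :
    ∃ B : Omega a, rel a A B ∧
      (B : Matrix (Fin n) (Fin n) ℤ) i j = (A : Matrix (Fin n) (Fin n) ℤ) i j + t * (a j - a i) ∧
      ∀ r s : Fin n, (s : ℕ) - (r : ℕ) ≤ (j : ℕ) - (i : ℕ) → ¬(r = i ∧ s = j) →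
        (B : Matrix (Fin n) (Fin n) ℤ) r s = (A : Matrix (Fin n) (Fin n) ℤ) r s := by
  set S : Matrix (Fin n) (Fin n) ℤ := Matrix.single i j t with hS
  have hSS : S * S = 0 := Matrix.single_mul_single_of_ne (c := t) i j i (hij.ne.symm) t
  have hEE : (1 + S) * (1 - S) = 1 := by
    have : (1 + S) * (1 - S) = 1 - S * S := by noncomm_ring
    rw [this, hSS, sub_zero]
  have hEE' : (1 - S) * (1 + S) = 1 := by
    have : (1 - S) * (1 + S) = 1 - S * S := by noncomm_ring
    rw [this, hSS, sub_zero]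
  set P : Matrix.GeneralLinearGroup (Fin n) ℤ := ⟨1 + S, 1 - S, hEE, hEE'⟩ with hP
  set C : Matrix (Fin n) (Fin n) ℤ :=
    (1 + S) * (A : Matrix (Fin n) (Fin n) ℤ) * (1 - S) with hC
  have hexp : C = (A : Matrix (Fin n) (Fin n) ℤ) + S * A - (A : Matrix (Fin n) (Fin n) ℤ) * S
      - S * (A : Matrix (Fin n) (Fin n) ℤ) * S := by
    rw [hC]; noncomm_ring
  have hAji : (A : Matrix (Fin n) (Fin n) ℤ) j i = 0 :=
    A.2.1 (show (id i : Fin n) < id j from hij)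
  -- the generic entry preservation
  have hpres : ∀ r s : Fin n, (s : ℕ) - (r : ℕ) ≤ (j : ℕ) - (i : ℕ) → ¬(r = i ∧ s = j) →
      C r s = (A : Matrix (Fin n) (Fin n) ℤ) r s := by
    intro r s hdist hne
    rw [hexp]
    simp only [Matrix.sub_apply, Matrix.add_apply]
    by_cases hr : r = i
    · rw [hr] at hdist hne ⊢
      have hs : s ≠ j := fun h => hne ⟨rfl, h⟩
      have hsj : (s : ℕ) < (j : ℕ) := by
        have hij' : (i : ℕ) < (j : ℕ) := hij
        have : (s : ℕ) ≠ (j : ℕ) := fun h => hs (Fin.ext h)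
        omega
      have h1 : (S * (A : Matrix (Fin n) (Fin n) ℤ)) i s = t * (A : Matrix (Fin n) (Fin n) ℤ) j s :=
        Matrix.single_mul_apply_same (c := t) i j s _
      have h2 : ((A : Matrix (Fin n) (Fin n) ℤ)) j s = 0 :=
        A.2.1 (show (id s : Fin n) < id j from hsj)
      have h3 : ((A : Matrix (Fin n) (Fin n) ℤ) * S) i s = 0 :=
        Matrix.mul_single_apply_of_ne (c := t) i j i s hs _
      have h4 : (S * (A : Matrix (Fin n) (Fin n) ℤ) * S) i s = 0 :=
        Matrix.mul_single_apply_of_ne (c := t) i j i s hs _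
      rw [h1, h2, h3, h4, mul_zero]; ring
    · have h1 : (S * (A : Matrix (Fin n) (Fin n) ℤ)) r s = 0 :=
        Matrix.single_mul_apply_of_ne (c := t) i j r s hr _
      by_cases hs : s = j
      · rw [hs] at hdist h1 ⊢
        have h3 : ((A : Matrix (Fin n) (Fin n) ℤ) * S) r j =
            (A : Matrix (Fin n) (Fin n) ℤ) r i * t :=
          Matrix.mul_single_apply_same (c := t) i j r _
        have h4 : (S * (A : Matrix (Fin n) (Fin n) ℤ) * S) r j = 0 := by
          rw [Matrix.mul_single_apply_same,
            Matrix.single_mul_apply_of_ne (c := t) i j r i hr, zero_mul]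
        have hri : (i : ℕ) < (r : ℕ) := by
          have hij' : (i : ℕ) < (j : ℕ) := hij
          have : (r : ℕ) ≠ (i : ℕ) := fun h => hr (Fin.ext h)
          omega
        have h2 : ((A : Matrix (Fin n) (Fin n) ℤ)) r i = 0 :=
          A.2.1 (show (id i : Fin n) < id r from hri)
        rw [h1, h3, h4, h2]; ring
      · have h3 : ((A : Matrix (Fin n) (Fin n) ℤ) * S) r s = 0 :=
          Matrix.mul_single_apply_of_ne (c := t) i j r s hs _
        have h4 : (S * (A : Matrix (Fin n) (Fin n) ℤ) * S) r s = 0 :=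
          Matrix.mul_single_apply_of_ne (c := t) i j r s hs _
        rw [h1, h3, h4]; ring
  have hCij : C i j = (A : Matrix (Fin n) (Fin n) ℤ) i j + t * (a j - a i) := by
    rw [hexp]
    simp only [Matrix.sub_apply, Matrix.add_apply]
    rw [Matrix.single_mul_apply_same (c := t) i j j _,
      Matrix.mul_single_apply_same (c := t) i j i _,
      show (S * (A : Matrix (Fin n) (Fin n) ℤ) * S) i j =
        (S * (A : Matrix (Fin n) (Fin n) ℤ)) i i * t from
        Matrix.mul_single_apply_same (c := t) i j i _,
      Matrix.single_mul_apply_same (c := t) i j i _,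
      hAji, A.2.2 i, A.2.2 j, mul_zero, zero_mul]
    ring
  have hCmem : C.BlockTriangular id ∧ ∀ k, C k k = a k := by
    constructor
    · intro r s hrs
      have hrs' : (s : Fin n) < r := hrs
      have : C r s = (A : Matrix (Fin n) (Fin n) ℤ) r s := by
        apply hpres
        · have : (s : ℕ) < (r : ℕ) := hrs'
          omega
        · rintro ⟨rfl, rfl⟩
          exact absurd hij (not_lt.mpr hrs'.le)
      rw [this]
      exact A.2.1 hrs
    · intro k
      have : C k k = (A : Matrix (Fin n) (Fin n) ℤ) k k := by
        apply hpres
        · omega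
        · rintro ⟨rfl, rfl⟩
          exact absurd rfl hij.ne
      rw [this, A.2.2 k]
  refine ⟨⟨C, hCmem⟩, ⟨P, ?_, ?_, ?_⟩, hCij, hpres⟩
  · intro r s hrs
    have hrs' : (s : Fin n) < r := hrs
    show (1 + S) r s = 0
    have h1 : (1 : Matrix (Fin n) (Fin n) ℤ) r s = 0 :=
      Matrix.one_apply_ne (fun h => absurd h.symm hrs'.ne)
    have h2 : S r s = 0 := by
      apply Matrix.single_apply_of_ne
      rintro ⟨rfl, rfl⟩
      exact absurd hij (not_lt.mpr hrs'.le)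
    rw [Matrix.add_apply, h1, h2, add_zero]
  · intro k
    show (1 + S) k k = 1
    have h2 : S k k = 0 := by
      apply Matrix.single_apply_of_ne
      rintro ⟨rfl, rfl⟩
      exact absurd rfl hij.ne
    rw [Matrix.add_apply, Matrix.one_apply_eq, h2, add_zero]
  · rfl


/-- Inner reduction: fix entries at distance exactly `k+1` one by one. -/
lemma reduce_inner (ha : StrictMono a) (k : ℕ) : ∀ m : ℕ, ∀ A : Omega a,
    (∀ i j : Fin n, i < j → (j : ℕ) - (i : ℕ) ≤ k →
      0 ≤ (A : Matrix (Fin n) (Fin n) ℤ) i j ∧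
      (A : Matrix (Fin n) (Fin n) ℤ) i j < a j - a i) →
    ∃ B : Omega a, rel a A B ∧
      (∀ i j : Fin n, i < j → (j : ℕ) - (i : ℕ) ≤ k →
        0 ≤ (B : Matrix (Fin n) (Fin n) ℤ) i j ∧
        (B : Matrix (Fin n) (Fin n) ℤ) i j < a j - a i) ∧
      (∀ i j : Fin n, i < j → (j : ℕ) - (i : ℕ) = k + 1 → (i : ℕ) < m →
        0 ≤ (B : Matrix (Fin n) (Fin n) ℤ) i j ∧
        (B : Matrix (Fin n) (Fin n) ℤ) i j < a j - a i) := by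
  intro m
  induction m with
  | zero => exact fun A hA => ⟨A, (rel_equiv).refl A, hA, fun i j _ _ h => absurd h (by omega)⟩
  | succ m ih =>
    intro A hA
    obtain ⟨B, hAB, hB1, hB2⟩ := ih A hA
    by_cases hlt : m + (k + 1) < n
    · set i : Fin n := ⟨m, by omega⟩ with hi
      set j : Fin n := ⟨m + (k + 1), hlt⟩ with hj
      have hij : i < j := by simp [hi, hj, Fin.lt_def]
      have hd : 0 < a j - a i := sub_pos.mpr (ha hij)
      set d : ℤ := a j - a i with hdd
      set t : ℤ := -((B : Matrix (Fin n) (Fin n) ℤ) i j / d) with ht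
      obtain ⟨C, hBC, hCij, hCpres⟩ := elem_conj B i j hij t
      have hCval : (C : Matrix (Fin n) (Fin n) ℤ) i j
          = (B : Matrix (Fin n) (Fin n) ℤ) i j % d := by
        rw [hCij, ht, Int.emod_def]; ring
      refine ⟨C, (rel_equiv).trans hAB hBC, ?_, ?_⟩
      · intro r s hrs hdist
        have : (C : Matrix (Fin n) (Fin n) ℤ) r s = (B : Matrix (Fin n) (Fin n) ℤ) r s := by
          apply hCpres
          · simp only [hi, hj]; omega
          · rintro ⟨rfl, rfl⟩
            simp only [hi, hj] at hdist
            omega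
        rw [this]; exact hB1 r s hrs hdist
      · intro r s hrs hdist hrm
        by_cases hri : r = i ∧ s = j
        · obtain ⟨rfl, rfl⟩ := hri
          rw [hCval]
          exact ⟨Int.emod_nonneg _ (by omega), Int.emod_lt_of_pos _ hd⟩
        · have : (C : Matrix (Fin n) (Fin n) ℤ) r s = (B : Matrix (Fin n) (Fin n) ℤ) r s := by
            apply hCpres
            · simp only [hi, hj]; omega
            · exact hri
          rw [this]
          apply hB2 r s hrs hdist
          rcases Nat.lt_or_ge (r : ℕ) m with h | h
          · exact h
          · exfalso
            apply hri
            have hrm' : (r : ℕ) = m := by omega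
            have hsm : (s : ℕ) = m + (k + 1) := by
              have : (r : ℕ) < (s : ℕ) := hrs
              omega
            exact ⟨Fin.ext (by simp [hi, hrm']), Fin.ext (by simp [hj, hsm])⟩
    · refine ⟨B, hAB, hB1, fun i j hij hdist him => ?_⟩
      apply hB2 i j hij hdist
      have h1 : (i : ℕ) < (j : ℕ) := hij
      have h2 : (j : ℕ) < n := j.isLt
      omega

/-- Outer reduction: every matrix is equivalent to one in the box. -/
lemma reduce (ha : StrictMono a) (A : Omega a) :
    ∃ B : Omega a, rel a A B ∧ InBox B := by
  have main : ∀ k : ℕ, ∃ B : Omega a, rel a A B ∧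
      ∀ i j : Fin n, i < j → (j : ℕ) - (i : ℕ) ≤ k →
        0 ≤ (B : Matrix (Fin n) (Fin n) ℤ) i j ∧
        (B : Matrix (Fin n) (Fin n) ℤ) i j < a j - a i := by
    intro k
    induction k with
    | zero =>
      refine ⟨A, (rel_equiv).refl A, fun i j hij hdist => absurd hdist ?_⟩
      have : (i : ℕ) < (j : ℕ) := hij
      omega
    | succ k ih =>
      obtain ⟨B, hAB, hB⟩ := ih
      obtain ⟨C, hBC, hC1, hC2⟩ := reduce_inner ha k n B hB
      refine ⟨C, (rel_equiv).trans hAB hBC, fun i j hij hdist => ?_⟩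
      rcases Nat.lt_or_ge ((j : ℕ) - (i : ℕ)) (k + 1) with h | h
      · exact hC1 i j hij (by omega)
      · exact hC2 i j hij (by omega) i.isLt
  obtain ⟨B, hAB, hB⟩ := main n
  refine ⟨B, hAB, fun i j hij => hB i j hij ?_⟩
  have := j.isLt
  omega


variable (a) in
/-- The box is in bijection with a product of finite intervals. -/
noncomputable def boxEquiv : {B : Omega a // InBox B} ≃
    ((p : {p : Fin n × Fin n // p.1 < p.2}) → Fin ((a p.1.2 - a p.1.1).toNat)) where
  toFun B p := ⟨((B.1 : Matrix (Fin n) (Fin n) ℤ) p.1.1 p.1.2).toNat, by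
    obtain ⟨h1, h2⟩ := B.2 p.1.1 p.1.2 p.2
    omega⟩
  invFun f := ⟨⟨Matrix.of fun i j =>
      if h : i < j then ((f ⟨(i, j), h⟩ : ℕ) : ℤ) else if i = j then a i else 0, by
        constructor
        · intro i j hij
          have h1 : ¬ (i < j) := by
            have : (id j : Fin n) < id i := hij
            exact not_lt.mpr this.le
          have h2 : i ≠ j := by
            have : (id j : Fin n) < id i := hij
            exact fun h => absurd h.symm this.ne
          simp [Matrix.of_apply, h1, h2]
        · intro i
          simp [Matrix.of_apply, lt_irrefl]⟩, by
      intro i j hij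
      have hval : ((f ⟨(i, j), hij⟩ : ℕ)) < ((a j - a i).toNat) := (f ⟨(i, j), hij⟩).isLt
      constructor
      · simp only [Matrix.of_apply, dif_pos hij]
        positivity
      · simp only [Matrix.of_apply, dif_pos hij]
        omega⟩
  left_inv B := by
    apply Subtype.ext
    apply Subtype.ext
    ext i j
    dsimp only [Matrix.of_apply]
    rcases lt_trichotomy i j with h | h | h
    · rw [dif_pos h]
      exact Int.toNat_of_nonneg (B.2 i j h).1
    · subst h
      rw [dif_neg (lt_irrefl i), if_pos rfl, (B.1).2.2 i]
    · rw [dif_neg (not_lt.mpr h.le), if_neg (fun he => absurd he.symm h.ne)]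
      exact ((B.1).2.1 (show (id j : Fin n) < id i from h)).symm
  right_inv f := by
    funext p
    apply Fin.ext
    obtain ⟨⟨i, j⟩, hp⟩ := p
    simp only [Matrix.of_apply, dif_pos hp, Int.toNat_natCast]

lemma card_eq (ha : StrictMono a) :
    (Nat.card (Quot (rel a)) : ℤ) =
      ∏ p ∈ Finset.univ.filter (fun p : Fin n × Fin n => p.1 < p.2), (a p.2 - a p.1) := by
  -- bijection between the box and the quotient
  have hbij : Function.Bijective
      (fun B : {B : Omega a // InBox B} => Quot.mk (rel a) B.1) := by
    constructor
    · intro B B' h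
      apply Subtype.ext
      exact box_unique ha B.2 B'.2 ((rel_equiv).eqvGen_iff.mp (Quot.eqvGen_exact h))
    · intro q
      induction q using Quot.ind with
      | mk A =>
        obtain ⟨B, hAB, hB⟩ := reduce ha A
        exact ⟨⟨B, hB⟩, (Quot.sound hAB).symm⟩
  rw [← Nat.card_eq_of_bijective _ hbij, Nat.card_congr (boxEquiv a), Nat.card_pi]
  have hstep : ∀ p : {p : Fin n × Fin n // p.1 < p.2},
      Nat.card (Fin ((a p.1.2 - a p.1.1).toNat)) = (a p.1.2 - a p.1.1).toNat := by
    intro p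
    rw [Nat.card_eq_fintype_card, Fintype.card_fin]
  rw [Finset.prod_congr rfl (fun p _ => hstep p)]
  rw [← Finset.prod_subtype (Finset.univ.filter (fun p : Fin n × Fin n => p.1 < p.2))
      (fun p => by simp) (fun p : Fin n × Fin n => (a p.2 - a p.1).toNat)]
  push_cast
  refine Finset.prod_congr rfl (fun p hp => ?_)
  have hlt : p.1 < p.2 := (Finset.mem_filter.mp hp).2
  exact Int.toNat_of_nonneg (sub_nonneg.mpr (ha hlt).le)

end Stmt6

/-- The number of orbits of the conjugation action of the unipotent upper triangular
group `U_n(ℤ)` on the set `Ω` of upper triangular integer matrices with diagonal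
`a 1 < ⋯ < a n` equals `Δ = ∏_{i<j} (a j - a i)`. -/
theorem stmt_6 (n : ℕ) (a : Fin n → ℤ) (ha : StrictMono a) :
    (Nat.card (Quot (fun A B : {M : Matrix (Fin n) (Fin n) ℤ //
        M.BlockTriangular id ∧ ∀ i, M i i = a i} =>
      ∃ P : Matrix.GeneralLinearGroup (Fin n) ℤ,
        (P : Matrix (Fin n) (Fin n) ℤ).BlockTriangular id ∧
        (∀ i, (P : Matrix (Fin n) (Fin n) ℤ) i i = 1) ∧
        (P : Matrix (Fin n) (Fin n) ℤ) * (A : Matrix (Fin n) (Fin n) ℤ) *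
          ((P⁻¹ : Matrix.GeneralLinearGroup (Fin n) ℤ) : Matrix (Fin n) (Fin n) ℤ) = B)) : ℤ) =
    ∏ p ∈ Finset.univ.filter (fun p : Fin n × Fin n => p.1 < p.2), (a p.2 - a p.1) := by
  exact Stmt6.card_eq ha
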